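/- (Exact resolution of stationary contact discontinuities.) Let e, σ : (0,∞) → ℝ and let ρ_L, ρ_R, p > 0 with ρ_L ≠ ρ_R. For K ∈ {L,R} set θ_K = p/ρ_K, z₂,K = ρ_K/p, h_K = 1 + e(θ_K) + θ_K, S_K = −ln ρ_K + σ(θ_K); the two states have zero velocity, so their entropy variables are W_K = (z₂,K h_K − S_K, 0, −z₂,K) ∈ ℝ³. Define E = ([W₁] − [ln ρ])/[z₂] (with [a] = a_R − a_L) and the averaged enthalpy h̄ = E + 1/{{z₂}}_ln where {{z₂}}_ln = [z₂]/[ln z₂]. Let θ̄ > 0, ρ̄ > 0, and E′ > 0 be arbitrary averaged values with h̄E′ > 0, and set c̄ = √(θ̄(1+E′)/(h̄E′)). Define the dissipation matrix D = R̃ · diag(c̄, 0, c̄) · D̃ · R̃ᵀ, where R̃ = [[1, 1, 1], [−c̄h̄, 0, c̄h̄], [h̄, h̄−θ̄(1+E′), h̄]] and D̃ = diag(ρ̄E′/(2(1+E′)), ρ̄/(1+E′), ρ̄E′/(2(1+E′))). Then D·(W_R − W_L) = (c̄ρ̄E′/(1+E′))·([W₁] − h̄[z₂])·(1, 0, h̄)ᵀ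 = 0; that is, the entropy stable flux reduces to the entropy conservative flux on a stationary contact discontinuity. -/

import Mathlib

open Matrix

/-- Exact resolution of stationary contact discontinuities: for two zero-velocity states
with equal pressure `p` and densities `ρ_L ≠ ρ_R`, if the averaged enthalpy in the
Roe-type dissipation matrix `D = R̃ · diag(c̄,0,c̄) · D̃ · R̃ᵀ` is chosen as
`h̄ = E + 1/{{z₂}}_ln`, then `D` annihilates the jump of the entropy variables:
`D(W_R − W_L) = (c̄ρ̄E′/(1+E′))([W₁] − h̄[z₂])(1,0,h̄)ᵀ = 0`. -/

private lemma aux14 (C H T d0 d1 a : ℝ) :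
    (!![1, 1, 1; -(C * H), 0, C * H; H, H - T, H] * Matrix.diagonal ![C, 0, C] *
        Matrix.diagonal ![d0, d1, d0] *
        (!![1, 1, 1; -(C * H), 0, C * H; H, H - T, H])ᵀ) *ᵥ ![H * a, 0, -a] = 0 := by
  funext i
  fin_cases i <;>
    simp [Matrix.mulVec, Matrix.vecMul, Matrix.mul_apply, dotProduct,
      Fin.sum_univ_three, Matrix.diagonal, Matrix.vecHead, Matrix.vecTail,
      Matrix.of_apply, Function.comp] <;> ring

theorem stmt14 (e σ : ℝ → ℝ) (ρL ρR p θb ρb E' : ℝ)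
    (hρL : 0 < ρL) (hρR : 0 < ρR) (hp : 0 < p) (hne : ρL ≠ ρR)
    (hθb : 0 < θb) (hρb : 0 < ρb) (hE : 0 < E') :
    let z2L : ℝ := ρL / p
    let z2R : ℝ := ρR / p
    let hL : ℝ := 1 + e (p / ρL) + p / ρL
    let hR : ℝ := 1 + e (p / ρR) + p / ρR
    let SL : ℝ := -Real.log ρL + σ (p / ρL)
    let SR : ℝ := -Real.log ρR + σ (p / ρR)
    let WL : Fin 3 → ℝ := ![z2L * hL - SL, 0, -z2L]
    let WR : Fin 3 → ℝ := ![z2R * hR - SR, 0, -z2R]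
    let jW1 : ℝ := (z2R * hR - SR) - (z2L * hL - SL)
    let jz2 : ℝ := z2R - z2L
    let E : ℝ := (jW1 - (Real.log ρR - Real.log ρL)) / jz2
    let lz2 : ℝ := jz2 / (Real.log z2R - Real.log z2L)
    let hb : ℝ := E + 1 / lz2
    let cb : ℝ := Real.sqrt (θb * (1 + E') / (hb * E'))
    let Rt : Matrix (Fin 3) (Fin 3) ℝ :=
      !![1, 1, 1;
         -(cb * hb), 0, cb * hb;
         hb, hb - θb * (1 + E'), hb]
    let Dt : Matrix (Fin 3) (Fin 3) ℝ :=
      Matrix.diagonal ![ρb * E' / (2 * (1 + E')), ρb / (1 + E'), ρb * E' / (2 * (1 + E'))]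
    let D : Matrix (Fin 3) (Fin 3) ℝ := Rt * Matrix.diagonal ![cb, 0, cb] * Dt * Rtᵀ
    0 < hb * E' →
      D *ᵥ (WR - WL) = ((cb * ρb * E' / (1 + E')) * (jW1 - hb * jz2)) • ![1, 0, hb] ∧
        D *ᵥ (WR - WL) = 0 := by
  intro z2L z2R hL hR SL SR WL WR jW1 jz2 E lz2 hb cb Rt Dt D _
  -- key facts
  have hjz2 : jz2 ≠ 0 := by
    have : z2R - z2L = (ρR - ρL) / p := by simp only [z2L, z2R, sub_div]
    simp only [jz2, this]
    exact div_ne_zero (sub_ne_zero.2 (Ne.symm hne)) hp.ne'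
  have hlog : Real.log z2R - Real.log z2L = Real.log ρR - Real.log ρL := by
    simp only [z2L, z2R, Real.log_div hρL.ne' hp.ne', Real.log_div hρR.ne' hp.ne']
    ring
  have hlogne : Real.log ρR - Real.log ρL ≠ 0 := by
    refine sub_ne_zero.2 fun h => hne ?_
    exact (Real.log_injOn_pos (Set.mem_Ioi.2 hρR) (Set.mem_Ioi.2 hρL) h).symm
  have key : jW1 - hb * jz2 = 0 := by
    have h1 : hb = E + (Real.log ρR - Real.log ρL) / jz2 := by
      simp only [hb, lz2, hlog, one_div_div]
    rw [h1]
    simp only [E]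
    field_simp
    ring
  have hveq : WR - WL = ![jW1, 0, -jz2] := by
    funext i
    fin_cases i <;> simp [WL, WR, jW1, jz2] <;> ring
  have hkey' : jW1 = hb * jz2 := by linarith [key]
  have hzero : D *ᵥ (WR - WL) = 0 := by
    rw [hveq, hkey']
    exact aux14 cb hb (θb * (1 + E')) (ρb * E' / (2 * (1 + E'))) (ρb / (1 + E')) jz2
  refine ⟨?_, hzero⟩
  rw [hzero, key, mul_zero, zero_smul]
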